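/- Let K ⊆ L be an extension of differential fields of characteristic zero such that every constant of L lies in K (i.e. every x ∈ L with x′ = 0 belongs to the image of K). Let α ∈ L be a nonzero element which is the exponential of an integral over K, i.e. α′/α = k for some k ∈ K. If α is algebraic over K, then there exists a natural number n ≥ 1 such that αⁿ ∈ K. -/

import Mathlib

open Polynomial Finset

/-- If `L|K` has no new constants and `α ∈ L` is a nonzero exponential of
an integral over `K` (`α′/α = k ∈ K`) which is algebraic over `K`, then `αⁿ ∈ K` for
some `n ≥ 1`. -/
theorem pow_mem_of_algebraic_exponential_of_integral
    (K L : Type*) [Field K] [Field L] [Algebra K L]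
    [CharZero K] [CharZero L]
    (dK : Derivation ℚ K K) (dL : Derivation ℚ L L)
    (hcompat : ∀ x : K, dL (algebraMap K L x) = algebraMap K L (dK x))
    (hconst : ∀ x : L, dL x = 0 → ∃ c : K, algebraMap K L c = x)
    (α : L) (hα0 : α ≠ 0) (k : K) (hk : dL α / α = algebraMap K L k)
    (halg : IsAlgebraic K α) :
    ∃ n : ℕ, 1 ≤ n ∧ ∃ c : K, algebraMap K L c = α ^ n := by
  have hα' : dL α = algebraMap K L k * α := by field_simp at hk; exact hk.trans (mul_comm _ _)
  have hint : IsIntegral K α := halg.isIntegral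
  set p := minpoly K α with hp
  set n := p.natDegree with hn
  have hn1 : 1 ≤ n := minpoly.natDegree_pos hint
  have hp0 : p ≠ 0 := minpoly.ne_zero hint
  have ha0 : p.coeff 0 ≠ 0 := minpoly.coeff_zero_ne_zero hint hα0
  -- derivative of powers of α
  have hpow : ∀ i : ℕ, dL (α ^ i) = (i : L) * algebraMap K L k * α ^ i := by
    intro i
    cases i with
    | zero => simp
    | succ j =>
      rw [Derivation.leibniz_pow, hα']
      simp only [Nat.add_sub_cancel, nsmul_eq_mul, smul_eq_mul]
      push_cast
      rw [pow_succ]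
      ring
  -- aeval α p = 0 as a sum
  have haev : ∑ i ∈ range (n + 1), algebraMap K L (p.coeff i) * α ^ i = 0 := by
    have := minpoly.aeval K α
    rw [Polynomial.aeval_eq_sum_range] at this
    simpa [Algebra.smul_def] using this
  -- differentiate
  have hdiff : ∑ i ∈ range (n + 1),
      algebraMap K L (dK (p.coeff i) + (i : K) * k * p.coeff i) * α ^ i = 0 := by
    have h0 : dL (∑ i ∈ range (n + 1), algebraMap K L (p.coeff i) * α ^ i) = 0 := by
      rw [haev]; simp
    rw [map_sum] at h0
    rw [← h0]
    apply Finset.sum_congr rfl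
    intro i _
    rw [Derivation.leibniz, hpow, hcompat, map_add]
    simp only [smul_eq_mul, map_add, map_mul, map_natCast]
    ring
  -- subtract n*k times the original relation
  set b : ℕ → K := fun i => dK (p.coeff i) + (i : K) * k * p.coeff i - (n : K) * k * p.coeff i
    with hb
  have hbsum : ∑ i ∈ range (n + 1), algebraMap K L (b i) * α ^ i = 0 := by
    have : ∑ i ∈ range (n + 1), algebraMap K L (b i) * α ^ i
        = (∑ i ∈ range (n + 1), algebraMap K L (dK (p.coeff i) + (i : K) * k * p.coeff i) * α ^ i)
          - algebraMap K L ((n : K) * k) *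
            ∑ i ∈ range (n + 1), algebraMap K L (p.coeff i) * α ^ i := by
      rw [Finset.mul_sum, ← Finset.sum_sub_distrib]
      apply Finset.sum_congr rfl
      intro i _
      simp only [hb, map_sub, map_add, map_mul]
      ring
    rw [this, hdiff, haev, mul_zero, sub_zero]
  have hbn : b n = 0 := by
    have : p.coeff n = 1 := by
      have := minpoly.monic hint
      simpa [hn] using this.coeff_natDegree
    simp [hb, this]
  -- the polynomial q with coefficients b i, degree < n, kills α
  set q : K[X] := ∑ i ∈ range n, C (b i) * X ^ i with hq
  have hqdeg : q.degree < p.degree := by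
    have h1 : q.degree < (n : WithBot ℕ) := by
      apply lt_of_le_of_lt (Polynomial.degree_sum_le _ _)
      apply Finset.sup_lt_iff (by exact_mod_cast WithBot.bot_lt_coe n) |>.mpr
      intro i hi
      exact lt_of_le_of_lt (degree_C_mul_X_pow_le _ _)
        (by exact_mod_cast Finset.mem_range.mp hi)
    rw [Polynomial.degree_eq_natDegree hp0]
    exact h1
  have hqaev : Polynomial.aeval α q = 0 := by
    rw [hq]
    rw [map_sum]
    have : ∀ i ∈ range n, (Polynomial.aeval α) (C (b i) * X ^ i)
        = algebraMap K L (b i) * α ^ i := by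
      intro i _
      simp [Polynomial.aeval_C]
    rw [Finset.sum_congr rfl this]
    rw [← hbsum, Finset.sum_range_succ, hbn]
    simp
  have hq0 : q = 0 := by
    by_contra h
    exact absurd (minpoly.degree_le_of_ne_zero K α h hqaev) (not_le.mpr hqdeg)
  have hb0 : b 0 = 0 := by
    have : q.coeff 0 = b 0 := by
      rw [hq, Polynomial.finset_sum_coeff]
      rw [Finset.sum_eq_single 0]
      · simp
      · intro i _ hi; simp [Polynomial.coeff_C_mul, Polynomial.coeff_X_pow, hi,
          (Ne.symm hi)]
      · intro h; exact absurd (Finset.mem_range.mpr hn1) h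
    rw [hq0] at this
    simpa using this.symm
  -- so dK a₀ = n k a₀
  have hda0 : dK (p.coeff 0) = (n : K) * k * p.coeff 0 := by
    have := hb0
    simp [hb] at this
    linear_combination this
  -- β = α^n / a₀ is a constant
  set a₀L := algebraMap K L (p.coeff 0) with ha0L
  have ha0L0 : a₀L ≠ 0 := by
    simp [ha0L]
    exact ha0
  have hβ : dL (α ^ n / a₀L) = 0 := by
    rw [Derivation.leibniz_div, hpow, ha0L, hcompat, hda0]
    push_cast
    simp only [smul_eq_mul]
    ring
  obtain ⟨c, hc⟩ := hconst _ hβ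
  refine ⟨n, hn1, c * p.coeff 0, ?_⟩
  rw [map_mul, hc]
  field_simp
  exact ha0L.symm
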